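/- Let P = v_1…v_k be a path that is last-arc-bounded with respect to a charge drop schedule C with g_{k−1} < 0, and let b ∈ [0,B]. If g_{k−1} ≥ −B and g^C(P) ≥ −b, then α_b(P) ≥ min{b + g^C(P), B + g_{k−1}}. -/
import Mathlib


open Finset

namespace EV

noncomputable section

/-- Charge after traversing `i` arcs of a path with arc gains `g`, battery capacity `B`,
initial charge `b`. -/
def charge (B b : ℝ) (g : ℕ → ℝ) : ℕ → ℝ
  | 0 => b
  | i + 1 => min (charge B b g i + g i) B

/-- The traversal of the path with `n` arcs is feasible from initial charge `b`. -/
def Feasible (B b : ℝ) (g : ℕ → ℝ) (n : ℕ) : Prop :=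
  ∀ i < n, 0 ≤ charge B b g i + g i

open Classical in
/-- Maximum final charge `α_b(P)` for a path `P` with `n` arc gains `g`,
as an extended real (`⊥ = -∞` if the traversal is infeasible). -/
def alpha (B b : ℝ) (g : ℕ → ℝ) (n : ℕ) : EReal :=
  if Feasible B b g n then ((charge B b g n : ℝ) : EReal) else ⊥

/-- Gain of the `i`-th vertex (0-indexed): the sum of the first `i` arc gains. -/
def vGain (g : ℕ → ℝ) (i : ℕ) : ℝ := ∑ t ∈ Finset.range i, g t

/-- `P` is traversable: `α_B(P) ≥ 0`, i.e. feasible from a full battery. -/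
def Traversable (B : ℝ) (g : ℕ → ℝ) (n : ℕ) : Prop := Feasible B B g n

/-- `C` is a charge drop schedule for a path with `n` arcs (vertices `0,…,n`):
no drop at the first vertex, all drops nonnegative. -/
def Schedule (C : ℕ → ℝ) (n : ℕ) : Prop := C 0 = 0 ∧ ∀ i ≤ n, 0 ≤ C i

/-- Gain of vertex `i` with respect to the charge drop schedule `C`. -/
def cGain (g C : ℕ → ℝ) (i : ℕ) : ℝ := vGain g i - ∑ t ∈ Finset.range (i + 1), C t

/-- `P` (with `n` arcs) is ascending with respect to the schedule `C`. -/
def AscendingC (B : ℝ) (g C : ℕ → ℝ) (n : ℕ) : Prop :=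
  Traversable B g n ∧ ∀ i ≤ n, 0 ≤ cGain g C i ∧ cGain g C i ≤ cGain g C n

/-- `P` (with `n` arcs) is descending with respect to the schedule `C`. -/
def DescendingC (B : ℝ) (g C : ℕ → ℝ) (n : ℕ) : Prop :=
  Traversable B g n ∧ ∀ i ≤ n, cGain g C n ≤ cGain g C i ∧ cGain g C i ≤ 0

/-- `P` is monotone with respect to the schedule `C`. -/
def MonotoneC (B : ℝ) (g C : ℕ → ℝ) (n : ℕ) : Prop :=
  AscendingC B g C n ∨ DescendingC B g C n

/-- Ascending with respect to the zero schedule. -/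
def Ascending (B : ℝ) (g : ℕ → ℝ) (n : ℕ) : Prop := AscendingC B g (fun _ => 0) n

/-- Descending with respect to the zero schedule. -/
def Descending (B : ℝ) (g : ℕ → ℝ) (n : ℕ) : Prop := DescendingC B g (fun _ => 0) n

/-- Monotone with respect to the zero schedule. -/
def MonotonePath (B : ℝ) (g : ℕ → ℝ) (n : ℕ) : Prop := Ascending B g n ∨ Descending B g n

/-- The contiguous subpath whose arcs start at arc index `a`. -/
def SubPath (g : ℕ → ℝ) (a : ℕ) : ℕ → ℝ := fun t => g (a + t)

/-- Restriction of a charge drop schedule to the subpath starting at vertex `a`: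
no drop at the subpath's first vertex. -/
def restrict (C : ℕ → ℝ) (a : ℕ) : ℕ → ℝ := fun t => if t = 0 then 0 else C (a + t)

/-- First-arc-bounded with respect to a schedule `C` (no drop at the second vertex,
and all vertex gains lie between the gains of the first two vertices). -/
def FirstArcBoundedC (g C : ℕ → ℝ) (n : ℕ) : Prop :=
  C 1 = 0 ∧
    ((0 ≤ g 0 ∧ ∀ i ≤ n, 0 ≤ cGain g C i ∧ cGain g C i ≤ g 0) ∨
     (g 0 ≤ 0 ∧ ∀ i ≤ n, g 0 ≤ cGain g C i ∧ cGain g C i ≤ 0))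

/-- Last-arc-bounded with respect to a schedule `C` (no drops at the last two vertices,
and all vertex gains lie between the gains of the last two vertices). -/
def LastArcBoundedC (g C : ℕ → ℝ) (n : ℕ) : Prop :=
  C (n - 1) = 0 ∧ C n = 0 ∧
    ((0 ≤ g (n - 1) ∧ ∀ i ≤ n, cGain g C (n - 1) ≤ cGain g C i ∧ cGain g C i ≤ cGain g C n) ∨
     (g (n - 1) < 0 ∧ ∀ i ≤ n, cGain g C n ≤ cGain g C i ∧ cGain g C i ≤ cGain g C (n - 1)))

/-- First-arc-bounded (zero schedule). -/
def FirstArcBounded (g : ℕ → ℝ) (n : ℕ) : Prop := FirstArcBoundedC g (fun _ => 0) n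

/-- Last-arc-bounded (zero schedule). -/
def LastArcBounded (g : ℕ → ℝ) (n : ℕ) : Prop := LastArcBoundedC g (fun _ => 0) n

/-- Arc-bounded: first- or last-arc-bounded. -/
def ArcBounded (g : ℕ → ℝ) (n : ℕ) : Prop := FirstArcBounded g n ∨ LastArcBounded g n

/-- A funnel: arc-bounded and containing no monotone subpath of 2 or 3 consecutive arcs. -/
def Funnel (B : ℝ) (g : ℕ → ℝ) (n : ℕ) : Prop :=
  ArcBounded g n ∧ ∀ a m, (m = 2 ∨ m = 3) → a + m ≤ n → ¬ MonotonePath B (SubPath g a) m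

/-- `j = s̄(i)`: the maximal index `j ≥ i` (among arcs of a path with `n` arcs) such that
the subpath of arcs `i,…,j` is first-arc-bounded. -/
def IsSbar (g : ℕ → ℝ) (n i j : ℕ) : Prop :=
  i ≤ j ∧ j < n ∧ FirstArcBounded (SubPath g i) (j - i + 1) ∧
    ∀ j', i ≤ j' → j' < n → FirstArcBounded (SubPath g i) (j' - i + 1) → j' ≤ j

/-- `j = s̲(i)`: the minimal index `j ≤ i` such that the subpath of arcs `j,…,i`
is last-arc-bounded. -/
def IsSlow (g : ℕ → ℝ) (n i j : ℕ) : Prop :=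
  j ≤ i ∧ i < n ∧ LastArcBounded (SubPath g j) (i - j + 1) ∧
    ∀ j', j' ≤ i → LastArcBounded (SubPath g j') (i - j' + 1) → j ≤ j'

/-- Arc gains of the walk around a cycle with `m` arc gains `g`, starting at vertex `a`. -/
def cyc (g : ℕ → ℝ) (m a : ℕ) : ℕ → ℝ := fun t => g ((a + t) % m)

/-- A walk of length `ℓ` from `x` to `y` in the directed graph with arc relation `A`. -/
def IsWalk {V : Type*} (A : V → V → Prop) (w : ℕ → V) (ℓ : ℕ) (x y : V) : Prop :=
  w 0 = x ∧ w ℓ = y ∧ ∀ t < ℓ, A (w t) (w (t + 1))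

/-- The sequence of arc gains induced by a walk `w` in a graph with gain function `g`. -/
def walkGains {V : Type*} (g : V → V → ℝ) (w : ℕ → V) : ℕ → ℝ :=
  fun t => g (w t) (w (t + 1))

/-- If `P` is last-arc-bounded with respect to a schedule `C` with
`g_{k-1} < 0`, `b ∈ [0,B]`, `g_{k-1} ≥ -B` and `g^C(P) ≥ -b`, then
`α_b(P) ≥ min{b + g^C(P), B + g_{k-1}}`. -/
theorem alpha_of_lastArcBounded (B : ℝ) (hB : 0 < B) (g C : ℕ → ℝ) (n : ℕ) (hn : 1 ≤ n)
    (hC : Schedule C n) (hLAB : LastArcBoundedC g C n) (hneg : g (n - 1) < 0)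
    (b : ℝ) (hb0 : 0 ≤ b) (hbB : b ≤ B) (hgB : -B ≤ g (n - 1)) (hg : -b ≤ cGain g C n) :
    ((min (b + cGain g C n) (B + g (n - 1)) : ℝ) : EReal) ≤ alpha B b g n := by
  obtain ⟨hC1, hC2, hLAB'⟩ := hLAB
  have hbound : ∀ i ≤ n, cGain g C n ≤ cGain g C i ∧ cGain g C i ≤ cGain g C (n-1) := by
    rcases hLAB' with h | h
    · exact absurd h.1 (not_le.mpr hneg)
    · exact h.2
  have hsucc : ∀ i, cGain g C (i+1) = cGain g C i + g i - C (i+1) := by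
    intro i
    simp only [cGain, vGain, Finset.sum_range_succ]
    ring
  have hGn : cGain g C n = cGain g C (n-1) + g (n-1) := by
    have h : n - 1 + 1 = n := Nat.succ_pred_eq_of_pos hn
    calc cGain g C n = cGain g C (n-1+1) := by rw [h]
      _ = cGain g C (n-1) + g (n-1) - C (n-1+1) := hsucc _
      _ = cGain g C (n-1) + g (n-1) := by rw [h, hC2]; ring
  have key : ∀ i ≤ n, (∀ j < i, 0 ≤ charge B b g j + g j) ∧
      min (b + cGain g C i) (B + (cGain g C i - cGain g C (n-1))) ≤ charge B b g i := by
    intro i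
    induction i with
    | zero =>
      intro _
      refine ⟨fun j hj => absurd hj (Nat.not_lt_zero j), ?_⟩
      have h0 : cGain g C 0 = 0 := by simp [cGain, vGain, hC.1]
      rw [h0]
      have : charge B b g 0 = b := rfl
      rw [this]
      exact le_trans (min_le_left _ _) (by linarith)
    | succ i ih =>
      intro hi
      have hi' : i ≤ n := le_of_lt (Nat.lt_of_succ_le hi)
      obtain ⟨hfeas, hch⟩ := ih hi'
      have hCpos : 0 ≤ C (i+1) := hC.2 _ hi
      have hGle : cGain g C (i+1) - cGain g C i ≤ g i := by
        rw [hsucc i]; linarith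
      have hb1 : cGain g C n ≤ cGain g C (i+1) := (hbound _ hi).1
      have hb2 : cGain g C (i+1) ≤ cGain g C (n-1) := (hbound _ hi).2
      have hstep : min (b + cGain g C (i+1)) (B + (cGain g C (i+1) - cGain g C (n-1)))
          ≤ charge B b g i + g i := by
        calc min (b + cGain g C (i+1)) (B + (cGain g C (i+1) - cGain g C (n-1)))
            = min (b + cGain g C i) (B + (cGain g C i - cGain g C (n-1)))
              + (cGain g C (i+1) - cGain g C i) := by
              rw [← min_add_add_right]; congr 1 <;> ring
          _ ≤ charge B b g i + g i := add_le_add hch hGle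
      have hpos : (0:ℝ) ≤ min (b + cGain g C (i+1))
          (B + (cGain g C (i+1) - cGain g C (n-1))) :=
        le_min (by linarith) (by linarith)
      refine ⟨?_, ?_⟩
      · intro j hj
        rcases Nat.lt_succ_iff_lt_or_eq.mp hj with h | h
        · exact hfeas j h
        · subst h; exact le_trans hpos hstep
      · have hcs : charge B b g (i+1) = min (charge B b g i + g i) B := rfl
        rw [hcs]
        exact le_min hstep (le_trans (min_le_right _ _) (by linarith))
  obtain ⟨hfeas, hfin⟩ := key n le_rfl
  have hF : Feasible B b g n := hfeas
  have hfin' : min (b + cGain g C n) (B + g (n-1)) ≤ charge B b g n := by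
    have he : B + (cGain g C n - cGain g C (n-1)) = B + g (n-1) := by linarith
    rwa [he] at hfin
  rw [alpha, if_pos hF]
  exact_mod_cast hfin'

end

end EV
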